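/- Let d ≥ 1, C ∈ M_d(ℂ), z ∈ ℂ, and let (B_n)_{n≥1} be Hermitian matrices in M_d(ℂ). Let (ū_n)_{n≥0} be a sequence in ℂ^d with Σ_{n≥0} ‖ū_n‖² < ∞ satisfying C·ū_{n+1} + B_n·ū_n + C*·ū_{n−1} = z·ū_n for all n ≥ 1. Then Im(ū₀* C ū₁) = −Im(z) · Σ_{n=1}^∞ ‖ū_n‖². -/

import Mathlib

open scoped Real
open Filter Matrix

noncomputable section

lemma aux_conj (d : ℕ) (A : Matrix (Fin d) (Fin d) ℂ) (x y : Fin d → ℂ) :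
    star x ⬝ᵥ (Aᴴ *ᵥ y) = star (star y ⬝ᵥ (A *ᵥ x)) := by
  simp only [dotProduct, mulVec, Matrix.conjTranspose_apply, star_sum, star_mul',
    Finset.mul_sum, Pi.star_apply, star_star]
  rw [Finset.sum_comm]
  apply Finset.sum_congr rfl; intro i _
  apply Finset.sum_congr rfl; intro j _
  ring

lemma aux_smul (d : ℕ) (x : Fin d → ℂ) (z : ℂ) :
    (star x ⬝ᵥ (z • x)) = z * (∑ i, (‖x i‖^2 : ℝ) : ℂ) := by
  simp only [dotProduct, Pi.smul_apply, smul_eq_mul, Pi.star_apply]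
  push_cast
  rw [Finset.mul_sum]
  apply Finset.sum_congr rfl; intro i _
  rw [show star (x i) * (z * x i) = z * (x i * star (x i)) by ring,
    Complex.star_def, Complex.mul_conj, Complex.normSq_eq_norm_sq]
  norm_cast

theorem statement13
    (d : ℕ) (hd : 1 ≤ d) (C : Matrix (Fin d) (Fin d) ℂ) (z : ℂ)
    (B : ℕ → Matrix (Fin d) (Fin d) ℂ) (hB : ∀ n : ℕ, 1 ≤ n → (B n).IsHermitian)
    (u : ℕ → Fin d → ℂ)
    (hsum : Summable (fun n : ℕ => ∑ i, ‖u n i‖ ^ 2))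
    (heq : ∀ n : ℕ, 1 ≤ n →
      C *ᵥ u (n + 1) + B n *ᵥ u n + Cᴴ *ᵥ u (n - 1) = z • u n) :
    (star (u 0) ⬝ᵥ (C *ᵥ u 1)).im = - z.im * ∑' n : ℕ, ∑ i, ‖u (n + 1) i‖ ^ 2 := by
  set f : ℕ → ℝ := fun n => (star (u n) ⬝ᵥ (C *ᵥ u (n + 1))).im with hf
  set s : ℕ → ℝ := fun n => ∑ i, ‖u n i‖ ^ 2 with hs
  -- step identity
  have hstep : ∀ n : ℕ, f (n + 1) = f n + z.im * s (n + 1) := by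
    intro n
    have h := heq (n + 1) (by omega)
    simp only [Nat.add_sub_cancel] at h
    have h2 := congrArg (fun v => star (u (n + 1)) ⬝ᵥ v) h
    simp only [dotProduct_add] at h2
    have hherm : (star (u (n + 1)) ⬝ᵥ (B (n + 1) *ᵥ u (n + 1))).im = 0 := by
      have hb := hB (n + 1) (by omega)
      have := aux_conj d (B (n + 1)) (u (n + 1)) (u (n + 1))
      rw [hb.eq] at this
      have : (star (u (n+1)) ⬝ᵥ (B (n+1) *ᵥ u (n+1))).im
          = -(star (u (n+1)) ⬝ᵥ (B (n+1) *ᵥ u (n+1))).im := by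
        conv_lhs => rw [this]
        simp
      linarith
    have hconj : (star (u (n + 1)) ⬝ᵥ (Cᴴ *ᵥ u n)).im
        = -(star (u n) ⬝ᵥ (C *ᵥ u (n + 1))).im := by
      rw [aux_conj]; simp
    have him := congrArg Complex.im h2
    rw [aux_smul] at him
    simp only [Complex.add_im, hherm, hconj, Complex.mul_im] at him
    simp only [Complex.im_sum, Complex.re_sum, Complex.ofReal_re, Complex.ofReal_im,
      Finset.sum_const_zero, mul_zero, add_zero] at him
    simp only [hf, hs]
    linarith [him]
  -- partial sums formula
  have hpart : ∀ N : ℕ, f N = f 0 + z.im * ∑ k ∈ Finset.range N, s (k + 1) := by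
    intro N
    induction N with
    | zero => simp
    | succ N ih => rw [hstep N, ih, Finset.sum_range_succ]; ring
  -- summability of shifted
  have hg : Summable (fun n : ℕ => s (n + 1)) := (summable_nat_add_iff 1).2 hsum
  have hs0 : Tendsto s atTop (nhds 0) := hsum.tendsto_atTop_zero
  -- u n i → 0
  have hui : ∀ i, Tendsto (fun n => u n i) atTop (nhds 0) := by
    intro i
    rw [tendsto_zero_iff_norm_tendsto_zero]
    have hsq : Tendsto (fun n => ‖u n i‖ ^ 2) atTop (nhds 0) := by
      apply squeeze_zero (fun n => by positivity) (fun n => ?_) hs0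
      exact Finset.single_le_sum (f := fun j => ‖u n j‖ ^ 2) (fun j _ => by positivity)
        (Finset.mem_univ i)
    have := (Real.continuous_sqrt.tendsto 0).comp hsq
    simpa [Function.comp_def, Real.sqrt_sq_eq_abs, abs_norm] using this
  -- f N → 0
  have hf0 : Tendsto f atTop (nhds 0) := by
    have hdot : Tendsto (fun n => star (u n) ⬝ᵥ (C *ᵥ u (n + 1))) atTop (nhds 0) := by
      have : ∀ n, star (u n) ⬝ᵥ (C *ᵥ u (n + 1))
          = ∑ i, ∑ j, star (u n i) * (C i j * u (n + 1) j) := by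
        intro n; simp [dotProduct, mulVec, Finset.mul_sum]
      have key : Tendsto (fun n => ∑ i, ∑ j, star (u n i) * (C i j * u (n + 1) j))
          atTop (nhds (∑ i : Fin d, ∑ j : Fin d, (0 : ℂ))) := by
        apply tendsto_finset_sum; intro i _
        apply tendsto_finset_sum; intro j _
        have h1 : Tendsto (fun n => star (u n i)) atTop (nhds 0) := by
          simpa [Function.comp_def] using (continuous_star.tendsto (0 : ℂ)).comp (hui i)
        have h2 : Tendsto (fun n => u (n + 1) j) atTop (nhds 0) :=
          (hui j).comp (tendsto_add_atTop_nat 1)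
        simpa using h1.mul (h2.const_mul (C i j))
      rw [funext this]
      simpa using key
    have h3 : Tendsto (fun n => (star (u n) ⬝ᵥ (C *ᵥ u (n + 1))).im) atTop (nhds ((0:ℂ).im)) :=
      (Complex.continuous_im.tendsto 0).comp hdot
    rw [Complex.zero_im] at h3
    exact h3
  have hlim : Tendsto f atTop (nhds (f 0 + z.im * ∑' n, s (n + 1))) := by
    exact Tendsto.congr (fun N => (hpart N).symm)
      (tendsto_const_nhds.add ((hg.hasSum.tendsto_sum_nat).const_mul _))
  have := tendsto_nhds_unique hf0 hlim
  have : f 0 = - z.im * ∑' n, s (n + 1) := by linarith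
  simpa [hf, hs] using this
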